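/- arXiv:1902.09573 — 2 statements merged into one kernel-verified Lean document; each statement's English description precedes it below -/
import Mathlib

section
/- Let G be a bounded-degree graph on a compact metric space (I, d₀) of diameter 1, and let d be the neighborhood-isomorphism metric d(x,y) = inf over r and r-neighborhood isomorphisms φ of max{1/(r+1), d₀(φ)}. Then the completion (J, d) of (I, d) is a compact metric space. -/
open MeasureTheory

/-- The ball of graph radius `r` around `x` in the graph `G` (as a vertex set,
including `x` itself). -/
def gball {I : Type*} (G : I → I → Prop) (x : I) : ℕ → Set I
  | 0 => {x}
  | r + 1 => gball G x r ∪ {z | ∃ w ∈ gball G x r, G w z}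

/-- An `r`-neighborhood isomorphism between `x` and `y`: a rooted isomorphism of the
graph balls `B(x,r) → B(y,r)` sending `x` to `y` (encoded as a global map that is a
bijection between the balls preserving adjacency in both directions). -/
def IsNbhdIso {I : Type*} (G : I → I → Prop) (r : ℕ) (x y : I) (φ : I → I) : Prop :=
  φ x = y ∧ Set.BijOn φ (gball G x r) (gball G y r) ∧
    ∀ u ∈ gball G x r, ∀ v ∈ gball G x r, (G u v ↔ G (φ u) (φ v))

/-- The displacement `d₀(φ) = sup_{z ∈ B(x,r)} d₀(z, φ(z))` of a neighborhood map. -/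
noncomputable def disp {I : Type*} [MetricSpace I] (G : I → I → Prop) (x : I) (r : ℕ)
    (φ : I → I) : ℝ :=
  ⨆ z : gball G x r, dist (z : I) (φ z)

/-- The neighborhood-isomorphism metric
`d(x,y) = inf over r and r-neighborhood isomorphisms φ of max {1/(r+1), d₀(φ)}`. -/
noncomputable def nbhdDist {I : Type*} [MetricSpace I] (G : I → I → Prop) (x y : I) : ℝ :=
  sInf {m | ∃ (r : ℕ) (φ : I → I), IsNbhdIso G r x y φ ∧
    m = max (1 / ((r : ℝ) + 1)) (disp G x r φ)}

/-- `degIn G B x` is the number of neighbors of `x` in `B`. -/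
noncomputable def degIn {I : Type*} (G : I → I → Prop) (B : Set I) (x : I) : ℕ :=
  {y | y ∈ B ∧ G x y}.ncard

/-- The vertex set of the connected component of `x`. -/
def compSet {I : Type*} (G : I → I → Prop) (x : I) : Set I := {y | Relation.ReflTransGen G x y}

lemma self_mem_gball {I : Type*} (G : I → I → Prop) (x : I) : ∀ r, x ∈ gball G x r
  | 0 => Set.mem_singleton x
  | (r + 1) => Set.mem_union_left _ (self_mem_gball G x r)

lemma gball_finite {I : Type*} (G : I → I → Prop) (hfin : ∀ x : I, {y | G x y}.Finite)
    (x : I) : ∀ r, (gball G x r).Finite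
  | 0 => Set.finite_singleton x
  | (r + 1) => by
    have h1 := gball_finite G hfin x r
    have h2 : {z | ∃ w ∈ gball G x r, G w z} = ⋃ w ∈ gball G x r, {z | G w z} := by
      ext z; simp
    exact h1.union (h2 ▸ h1.biUnion fun w _ => hfin w)

lemma nbrs_ncard_le {I : Type*} (G : I → I → Prop)
    (D : ℕ) (hdeg : ∀ x : I, {y | G x y}.ncard ≤ D) {B : Set I} (hB : B.Finite) :
    {z | ∃ w ∈ B, G w z}.ncard ≤ B.ncard * D := by
  refine Set.Finite.induction_on (motive := fun B _ => {z | ∃ w ∈ B, G w z}.ncard ≤ B.ncard * D)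
    B hB (by simp) ?_
  intro a s ha hs ih
  have heq : {z | ∃ w ∈ insert a s, G w z} = {y | G a y} ∪ {z | ∃ w ∈ s, G w z} := by
    ext z; simp [or_and_right, exists_or]
  calc {z | ∃ w ∈ insert a s, G w z}.ncard
      ≤ {y | G a y}.ncard + {z | ∃ w ∈ s, G w z}.ncard := by
        rw [heq]; exact Set.ncard_union_le _ _
    _ ≤ D + s.ncard * D := add_le_add (hdeg a) ih
    _ = (insert a s).ncard * D := by
        rw [Set.ncard_insert_of_notMem ha hs]; ring

lemma gball_ncard {I : Type*} (G : I → I → Prop) (hfin : ∀ x : I, {y | G x y}.Finite)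
    (D : ℕ) (hdeg : ∀ x : I, {y | G x y}.ncard ≤ D) (x : I) :
    ∀ r, (gball G x r).ncard ≤ (D + 1) ^ r
  | 0 => by simp [gball, Set.ncard_singleton]
  | (r + 1) => by
    have hB := gball_finite G hfin x r
    calc (gball G x (r + 1)).ncard
        ≤ (gball G x r).ncard + {z | ∃ w ∈ gball G x r, G w z}.ncard :=
          Set.ncard_union_le _ _
      _ ≤ (D + 1) ^ r + (D + 1) ^ r * D := add_le_add (gball_ncard G hfin D hdeg x r)
          ((nbrs_ncard_le G D hdeg hB).trans
            (Nat.mul_le_mul_right D (gball_ncard G hfin D hdeg x r)))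
      _ = (D + 1) ^ (r + 1) := by rw [pow_succ]; ring

lemma exists_enum {I : Type*} {s : Set I} (hs : s.Finite) {x : I} (hx : x ∈ s)
    {N : ℕ} (hN : s.ncard ≤ N) : ∃ e : Fin N → I, Set.range e = s := by
  have hcard : hs.toFinset.card = s.ncard := by rw [Set.ncard_eq_toFinset_card _ hs]
  set g := hs.toFinset.equivFin with hg
  refine ⟨fun i => if h : (i : ℕ) < hs.toFinset.card then (g.symm ⟨i, h⟩ : I) else x, ?_⟩
  ext a
  constructor
  · rintro ⟨i, rfl⟩
    dsimp only
    split
    · exact hs.mem_toFinset.mp (g.symm _).2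
    · exact hx
  · intro ha
    have hmem : a ∈ hs.toFinset := hs.mem_toFinset.mpr ha
    refine ⟨⟨(g ⟨a, hmem⟩ : ℕ), lt_of_lt_of_le (g ⟨a, hmem⟩).isLt (hcard ▸ hN)⟩, ?_⟩
    dsimp only
    rw [dif_pos (g ⟨a, hmem⟩).isLt]
    have : (⟨(g ⟨a, hmem⟩ : ℕ), (g ⟨a, hmem⟩).isLt⟩ : Fin hs.toFinset.card) = g ⟨a, hmem⟩ :=
      Fin.ext rfl
    rw [this, Equiv.symm_apply_apply]

lemma key_iso {I : Type*} [MetricSpace I] (G : I → I → Prop) {r N : ℕ} {x y : I}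
    {ex ey : Fin N → I}
    (hx : Set.range ex = gball G x r) (hy : Set.range ey = gball G y r)
    (hA : ∀ i j, G (ex i) (ex j) ↔ G (ey i) (ey j))
    (hE : ∀ i j, ex i = ex j ↔ ey i = ey j)
    (hR : ∀ i, ex i = x ↔ ey i = y)
    {δ : ℝ} (hδ : 0 ≤ δ) (hnet : ∀ i, dist (ex i) (ey i) ≤ δ) :
    nbhdDist G x y ≤ max (1 / ((r : ℝ) + 1)) δ := by
  classical
  set φ : I → I := fun z => if h : ∃ i, ex i = z then ey (Classical.choose h) else z with hφ
  have hφ_spec : ∀ z (h : ∃ i, ex i = z), φ z = ey (Classical.choose h) := by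
    intro z h; simp only [hφ, dif_pos h]
  have hmx : ∀ z, z ∈ gball G x r ↔ ∃ i, ex i = z := by
    intro z; rw [← hx]; exact Iff.rfl
  have hmy : ∀ z, z ∈ gball G y r ↔ ∃ i, ey i = z := by
    intro z; rw [← hy]; exact Iff.rfl
  -- for z in the ball, φ z = ey i for the chosen i with ex i = z
  have hiso : IsNbhdIso G r x y φ := by
    refine ⟨?_, ⟨?_, ?_, ?_⟩, ?_⟩
    · -- φ x = y
      have h : ∃ i, ex i = x := (hmx x).mp (self_mem_gball G x r)
      rw [hφ_spec x h]
      exact (hR _).mp (Classical.choose_spec h)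
    · -- MapsTo
      intro z hz
      have h := (hmx z).mp hz
      rw [hφ_spec z h]
      exact (hmy _).mpr ⟨_, rfl⟩
    · -- InjOn
      intro z hz z' hz' hzz
      have h := (hmx z).mp hz
      have h' := (hmx z').mp hz'
      rw [hφ_spec z h, hφ_spec z' h'] at hzz
      have := (hE _ _).mpr hzz
      rw [Classical.choose_spec h, Classical.choose_spec h'] at this
      exact this
    · -- SurjOn
      intro b hb
      obtain ⟨j, hj⟩ := (hmy b).mp hb
      have hz : ex j ∈ gball G x r := (hmx _).mpr ⟨j, rfl⟩
      refine ⟨ex j, hz, ?_⟩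
      have h : ∃ i, ex i = ex j := ⟨j, rfl⟩
      rw [hφ_spec _ h]
      rw [(hE _ _).mp (Classical.choose_spec h)]
      exact hj
    · -- adjacency
      intro u hu v hv
      have h := (hmx u).mp hu
      have h' := (hmx v).mp hv
      rw [hφ_spec u h, hφ_spec v h']
      have h2 := hA (Classical.choose h) (Classical.choose h')
      rw [Classical.choose_spec h, Classical.choose_spec h'] at h2
      exact h2
  have hdisp : disp G x r φ ≤ δ := by
    refine Real.iSup_le (fun z => ?_) hδ
    have h := (hmx z).mp z.2
    rw [hφ_spec _ h]
    calc dist (z : I) (ey (Classical.choose h))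
        = dist (ex (Classical.choose h)) (ey (Classical.choose h)) := by
          rw [Classical.choose_spec h]
      _ ≤ δ := hnet _
  have hbdd : BddBelow {m | ∃ (r : ℕ) (φ : I → I), IsNbhdIso G r x y φ ∧
      m = max (1 / ((r : ℝ) + 1)) (disp G x r φ)} := by
    refine ⟨0, ?_⟩
    rintro m ⟨r', φ', -, rfl⟩
    exact le_trans (by positivity) (le_max_left _ _)
  calc nbhdDist G x y ≤ max (1 / ((r : ℝ) + 1)) (disp G x r φ) :=
        csInf_le hbdd ⟨r, φ, hiso, rfl⟩
    _ ≤ max (1 / ((r : ℝ) + 1)) δ := max_le_max le_rfl hdisp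
open Classical in
noncomputable def sigOf {I : Type*} (G : I → I → Prop) {N : ℕ} (e : I → Fin N → I) (x : I) :
    (Fin N → Fin N → Bool) × (Fin N → Fin N → Bool) × (Fin N → Bool) :=
  (fun i j => decide (G (e x i) (e x j)), fun i j => decide (e x i = e x j),
   fun i => decide (e x i = x))

lemma sigOf_eq {I : Type*} (G : I → I → Prop) {N : ℕ} (e : I → Fin N → I) {x y : I}
    (h : sigOf G e x = sigOf G e y) :
    (∀ i j, G (e x i) (e x j) ↔ G (e y i) (e y j)) ∧
      (∀ i j, e x i = e x j ↔ e y i = e y j) ∧ (∀ i, e x i = x ↔ e y i = y) := by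
  rw [sigOf, sigOf, Prod.mk.injEq, Prod.mk.injEq] at h
  obtain ⟨h1, h2, h3⟩ := h
  refine ⟨fun i j => ?_, fun i j => ?_, fun i => ?_⟩
  · exact decide_eq_decide.mp (congrFun (congrFun h1 i) j)
  · exact decide_eq_decide.mp (congrFun (congrFun h2 i) j)
  · exact decide_eq_decide.mp (congrFun h3 i)

/-- the completion `(J,d)` of `(I, nbhdDist)` is compact, where `(I,d₀)` is a
compact metric space of diameter `1` and `G` has bounded degree. (The completion is
presented abstractly: a complete metric space `J` with an isometric dense embedding
of `(I, nbhdDist)`.) -/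
theorem stmt5 {I : Type*} [MetricSpace I] [CompactSpace I] (hdiam : ∀ x y : I, dist x y ≤ 1)
    (G : I → I → Prop) (hsym : Symmetric G) (hirr : Irreflexive G)
    (D : ℕ) (hfin : ∀ x : I, {y | G x y}.Finite) (hdeg : ∀ x : I, {y | G x y}.ncard ≤ D)
    (J : Type*) [MetricSpace J] [CompleteSpace J] (f : I → J)
    (hiso : ∀ x y : I, dist (f x) (f y) = nbhdDist G x y)
    (hdense : DenseRange f) :
    CompactSpace J := by
  classical
  cases isEmpty_or_nonempty I with
  | inl hempty =>
    have : Set.range f = ∅ := Set.range_eq_empty f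
    have h1 : TotallyBounded (Set.univ : Set J) := by
      rw [← hdense.closure_range, this]
      exact totallyBounded_empty.closure
    exact ⟨isCompact_iff_totallyBounded_isComplete.mpr ⟨h1, complete_univ⟩⟩
  | inr hne =>
  have hTB : TotallyBounded (Set.range f) := by
    rw [Metric.totallyBounded_iff]
    intro ε hε
    obtain ⟨r, hr⟩ := exists_nat_gt (1 / ε)
    have hrε : 1 / ((r : ℝ) + 1) < ε := by
      rw [div_lt_iff₀ (by positivity)]
      have h1 : 1 < (r : ℝ) * ε := (div_lt_iff₀ hε).mp hr
      nlinarith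
    set N := (D + 1) ^ r with hN
    have hex : ∀ x : I, ∃ e : Fin N → I, Set.range e = gball G x r := fun x =>
      exists_enum (gball_finite G hfin x r) (self_mem_gball G x r)
        (gball_ncard G hfin D hdeg x r)
    choose e he using hex
    -- for each signature, a finite net of points with that signature
    have hσnet : ∀ σ : (Fin N → Fin N → Bool) × (Fin N → Fin N → Bool) × (Fin N → Bool),
        ∃ S : Set I, S.Finite ∧ ∀ x : I, sigOf G e x = σ →
          ∃ s ∈ S, sigOf G e s = σ ∧ dist (e x) (e s) < ε / 2 := by
      intro σ
      have htb : TotallyBounded (e '' {x | sigOf G e x = σ}) :=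
        TotallyBounded.subset (Set.subset_univ _) isCompact_univ.totallyBounded
      obtain ⟨t, hts, htfin, hcov⟩ :=
        totallyBounded_iff_subset.mp htb _ (Metric.dist_mem_uniformity (half_pos hε))
      have hch : ∀ p ∈ t, ∃ x, sigOf G e x = σ ∧ e x = p := by
        intro p hp
        obtain ⟨x, hx1, hx2⟩ := hts hp
        exact ⟨x, hx1, hx2⟩
      choose! pre hpre1 hpre2 using hch
      refine ⟨pre '' t, htfin.image _, ?_⟩
      intro x hxσ
      have hmem : e x ∈ e '' {x | sigOf G e x = σ} := ⟨x, hxσ, rfl⟩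
      obtain ⟨p, hp, hdp⟩ := Set.mem_iUnion₂.mp (hcov hmem)
      exact ⟨pre p, ⟨p, hp, rfl⟩, hpre1 p hp, by rw [hpre2 p hp]; exact hdp⟩
    choose S hSfin hS using hσnet
    refine ⟨f '' ⋃ σ, S σ, (Set.finite_iUnion hSfin).image f, ?_⟩
    rintro _ ⟨x, rfl⟩
    obtain ⟨s, hsS, hsig, hd⟩ := hS (sigOf G e x) x rfl
    refine Set.mem_iUnion₂.mpr ⟨f s, ⟨s, Set.mem_iUnion.mpr ⟨sigOf G e x, hsS⟩, rfl⟩, ?_⟩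
    rw [Metric.mem_ball, hiso]
    obtain ⟨hA, hE, hR⟩ := sigOf_eq G e hsig
    have hnet : ∀ i, dist (e x i) (e s i) ≤ ε / 2 := fun i =>
      (dist_le_pi_dist (e x) (e s) i).trans hd.le
    have := key_iso G (he x) (he s)
      (fun i j => (hA i j).symm) (fun i j => (hE i j).symm) (fun i => (hR i).symm)
      (by positivity) hnet
    exact lt_of_le_of_lt this (max_lt hrε (by linarith))
  have h1 : TotallyBounded (Set.univ : Set J) := by
    rw [← hdense.closure_range]
    exact hTB.closure
  exact ⟨isCompact_iff_totallyBounded_isComplete.mpr ⟨h1, complete_univ⟩⟩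
end

section
/- Let G = (I, d, E, λ) be a compact graphing and S the support of λ. Then no edge of G connects a point of S to a point of I \ S; consequently the restriction of G to S is a full subgraphing of G. -/
open MeasureTheory

/-- The (topological) support of a measure: points all of whose open neighborhoods have
positive measure. -/
def measSupport {I : Type*} [TopologicalSpace I] [MeasurableSpace I]
    (μ : MeasureTheory.Measure I) : Set I :=
  {x | ∀ U : Set I, IsOpen U → x ∈ U → μ U ≠ 0}

lemma mem_gball_self {I : Type*} (G : I → I → Prop) (x : I) (r : ℕ) : x ∈ gball G x r := by
  induction r with
  | zero => exact rfl
  | succ n ih => exact Or.inl ih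

lemma neighbor_mem_gball_one {I : Type*} (G : I → I → Prop) {x y : I} (h : G x y) :
    y ∈ gball G x 1 := Or.inr ⟨x, rfl, h⟩

lemma measSupport_compl_null {I : Type*} [MetricSpace I] [SecondCountableTopology I]
    [MeasurableSpace I] (μ : Measure I) : μ (measSupport μ)ᶜ = 0 := by
  classical
  set T : Set (Set I) := {b ∈ TopologicalSpace.countableBasis I | μ b = 0} with hT
  have hTc : T.Countable := (TopologicalSpace.countable_countableBasis I).mono (Set.sep_subset _ _)
  have hsub : (measSupport μ)ᶜ ⊆ ⋃₀ T := by
    intro x hx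
    simp only [measSupport, Set.mem_compl_iff, Set.mem_setOf_eq, not_forall] at hx
    push_neg at hx
    obtain ⟨U, hUopen, hxU, hU0⟩ := hx
    obtain ⟨b, hb, hxb, hbU⟩ :=
      (TopologicalSpace.isBasis_countableBasis I).exists_subset_of_mem_open hxU hUopen
    exact ⟨b, ⟨hb, le_antisymm (hU0 ▸ measure_mono hbU) (zero_le)⟩, hxb⟩
  refine le_antisymm (le_trans (measure_mono hsub) (le_of_eq ?_)) (zero_le)
  exact (measure_sUnion_null_iff hTc).2 fun s hs => hs.2

lemma isClosed_measSupport {I : Type*} [TopologicalSpace I] [MeasurableSpace I]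
    (μ : Measure I) : IsClosed (measSupport μ) := by
  rw [← isOpen_compl_iff]
  rw [isOpen_iff_forall_mem_open]
  intro x hx
  simp only [measSupport, Set.mem_compl_iff, Set.mem_setOf_eq, not_forall] at hx
  push_neg at hx
  obtain ⟨U, hUopen, hxU, hU0⟩ := hx
  refine ⟨U, fun z hz hzmem => ?_, hUopen, hxU⟩
  exact hzmem U hUopen hz hU0

lemma isOpen_le_degIn {I : Type*} [MetricSpace I]
    (G : I → I → Prop) (hfin : ∀ x : I, {y | G x y}.Finite)
    (hC3 : ∀ ε > (0:ℝ), ∀ r : ℕ, ∃ δ > (0:ℝ), ∀ x y : I, dist x y ≤ δ →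
      ∃ φ : I → I, IsNbhdIso G r x y φ ∧ ∀ z ∈ gball G x r, dist z (φ z) ≤ ε)
    {U : Set I} (hU : IsOpen U) (k : ℕ) :
    IsOpen {x : I | k ≤ degIn G U x} := by
  classical
  rcases Nat.eq_zero_or_pos k with hk | hk
  · subst hk; simp only [Nat.zero_le, Set.setOf_true]; exact isOpen_univ
  · rw [Metric.isOpen_iff]
    intro x hx
    have hx' : k ≤ degIn G U x := hx
    set F : Set I := {y | y ∈ U ∧ G x y} with hF
    have hFfin : F.Finite := (hfin x).subset (fun y hy => hy.2)
    have hFne : F.Nonempty := by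
      rw [← Set.ncard_pos hFfin]
      exact lt_of_lt_of_le hk hx'
    have hball : ∀ y ∈ F, ∃ ε > 0, Metric.ball y ε ⊆ U := fun y hy =>
      (Metric.isOpen_iff.1 hU) y hy.1
    choose! εf hεf hsubU using hball
    obtain ⟨ε₀, hε₀pos, hε₀⟩ : ∃ ε₀ > 0, ∀ y ∈ F, ε₀ ≤ εf y := by
      refine ⟨hFfin.toFinset.inf' (by simpa using hFne) εf, ?_, ?_⟩
      · show (0:ℝ) < _
        rw [Finset.lt_inf'_iff]
        intro y hy
        exact hεf y (hFfin.mem_toFinset.1 hy)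
      · intro y hy
        exact Finset.inf'_le _ (hFfin.mem_toFinset.2 hy)
    obtain ⟨δ, hδpos, hδ⟩ := hC3 (ε₀ / 2) (by positivity) 1
    refine ⟨δ, hδpos, ?_⟩
    intro x' hx'mem
    obtain ⟨φ, ⟨hφx, hbij, hedge⟩, hdisp⟩ :=
      hδ x x' (by rw [dist_comm]; exact (Metric.mem_ball.1 hx'mem).le)
    have hFsub : F ⊆ gball G x 1 := fun y hy => neighbor_mem_gball_one G hy.2
    have himg : φ '' F ⊆ {z | z ∈ U ∧ G x' z} := by
      rintro _ ⟨y, hy, rfl⟩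
      refine ⟨hsubU y hy ?_, ?_⟩
      · rw [Metric.mem_ball, dist_comm]
        have h1 := hdisp y (hFsub hy)
        have h2 := hε₀ y hy
        linarith
      · have := (hedge x (mem_gball_self G x 1) y (hFsub hy)).1 hy.2
        rwa [hφx] at this
    show k ≤ degIn G U x'
    calc k ≤ F.ncard := hx'
      _ = (φ '' F).ncard := (Set.ncard_image_of_injOn (hbij.injOn.mono hFsub)).symm
      _ ≤ {z | z ∈ U ∧ G x' z}.ncard :=
          Set.ncard_le_ncard himg ((hfin x').subset (fun z hz => hz.2))

lemma measurable_degIn {I : Type*} [MetricSpace I] [MeasurableSpace I] [BorelSpace I]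
    (G : I → I → Prop) (hfin : ∀ x : I, {y | G x y}.Finite)
    (hC3 : ∀ ε > (0:ℝ), ∀ r : ℕ, ∃ δ > (0:ℝ), ∀ x y : I, dist x y ≤ δ →
      ∃ φ : I → I, IsNbhdIso G r x y φ ∧ ∀ z ∈ gball G x r, dist z (φ z) ≤ ε)
    {U : Set I} (hU : IsOpen U) : Measurable fun x => (degIn G U x : ℝ) := by
  have h : Measurable (degIn G U) := by
    apply measurable_to_countable'
    intro n
    have heq : degIn G U ⁻¹' {n} =
        {x | n ≤ degIn G U x} \ {x | n + 1 ≤ degIn G U x} := by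
      ext x
      simp only [Set.mem_preimage, Set.mem_singleton_iff, Set.mem_diff, Set.mem_setOf_eq]
      omega
    rw [heq]
    exact ((isOpen_le_degIn G hfin hC3 hU n).measurableSet).diff
      ((isOpen_le_degIn G hfin hC3 hU (n + 1)).measurableSet)
  exact measurable_from_top.comp h

/-- in a compact graphing no edge connects the support `S` of `λ` to its
complement; consequently the restriction to `S` is a full subgraphing (`S` is a union of
components of full measure). -/
theorem stmt9 {I : Type*} [MetricSpace I] [CompactSpace I] [MeasurableSpace I] [BorelSpace I]
    (G : I → I → Prop) (hsym : Symmetric G) (hirr : Irreflexive G)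
    (D : ℕ) (hfin : ∀ x : I, {y | G x y}.Finite) (hdeg : ∀ x : I, {y | G x y}.ncard ≤ D)
    (hclosed : IsClosed {p : I × I | G p.1 p.2})
    (hC3 : ∀ ε > (0:ℝ), ∀ r : ℕ, ∃ δ > (0:ℝ), ∀ x y : I, dist x y ≤ δ →
      ∃ φ : I → I, IsNbhdIso G r x y φ ∧ ∀ z ∈ gball G x r, dist z (φ z) ≤ ε)
    (μ : Measure I) [IsProbabilityMeasure μ]
    (hMP : ∀ A B : Set I, MeasurableSet A → MeasurableSet B →
      ∫ x in A, (degIn G B x : ℝ) ∂μ = ∫ x in B, (degIn G A x : ℝ) ∂μ) :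
    (∀ x y : I, G x y → (x ∈ measSupport μ ↔ y ∈ measSupport μ)) ∧
    μ (measSupport μ) = 1 := by
  set S := measSupport μ with hS
  have hScompl : μ Sᶜ = 0 := measSupport_compl_null μ
  have hSmeas : MeasurableSet S := (isClosed_measSupport μ).measurableSet
  have hedge : ∀ x y : I, G x y → x ∈ S → y ∈ S := by
    intro x y hxy hxS
    by_contra hyS
    simp only [hS, measSupport, Set.mem_setOf_eq, not_forall] at hyS
    push_neg at hyS
    obtain ⟨U, hUopen, hyU, hU0⟩ := hyS
    -- x has a neighbor in U
    have hx1 : 1 ≤ degIn G U x := by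
      rw [Nat.one_le_iff_ne_zero, ← Nat.pos_iff_ne_zero]
      rw [degIn, Set.ncard_pos ((hfin x).subset (fun z hz => hz.2))]
      exact ⟨y, hyU, hxy⟩
    set V := {x' : I | 1 ≤ degIn G U x'} with hV
    have hVopen : IsOpen V := isOpen_le_degIn G hfin hC3 hUopen 1
    have hμV : μ V ≠ 0 := hxS V hVopen hx1
    -- integrability
    have hmeasf : Measurable fun z => (degIn G U z : ℝ) := measurable_degIn G hfin hC3 hUopen
    have hboundf : ∀ z, (degIn G U z : ℝ) ≤ (D : ℝ) := by
      intro z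
      have hsub : {w | w ∈ U ∧ G z w} ⊆ {w | G z w} := fun w hw => hw.2
      exact_mod_cast le_trans (Set.ncard_le_ncard hsub (hfin z)) (hdeg z)
    have hint : Integrable (fun z => (degIn G U z : ℝ)) μ := by
      refine (integrable_const (D : ℝ)).mono' hmeasf.aestronglyMeasurable ?_
      filter_upwards with z
      rw [Real.norm_of_nonneg (by positivity)]
      exact hboundf z
    have h0 : ∫ z in S, (degIn G U z : ℝ) ∂μ = 0 := by
      rw [hMP S U hSmeas hUopen.measurableSet]
      rw [Measure.restrict_eq_zero.2 hU0, integral_zero_measure]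
    have hμSV : μ (S ∩ V) ≠ 0 := by
      intro h
      apply hμV
      have hVeq : V = (S ∩ V) ∪ (Sᶜ ∩ V) := by
        rw [← Set.union_inter_distrib_right, Set.union_compl_self, Set.univ_inter]
      have : μ V ≤ μ (S ∩ V) + μ (Sᶜ ∩ V) := by
        calc μ V = μ ((S ∩ V) ∪ (Sᶜ ∩ V)) := by rw [← hVeq]
          _ ≤ _ := measure_union_le _ _
      rw [h, zero_add] at this
      exact le_antisymm (le_trans this (le_trans (measure_mono Set.inter_subset_left)
        hScompl.le)) (zero_le)
    have hpos : 0 < (μ (S ∩ V)).toReal :=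
      ENNReal.toReal_pos hμSV (measure_ne_top μ _)
    have h1 : (μ (S ∩ V)).toReal ≤ ∫ z in S, (degIn G U z : ℝ) ∂μ := by
      calc (μ (S ∩ V)).toReal = ∫ _ in S ∩ V, (1 : ℝ) ∂μ := by
            rw [setIntegral_const, smul_eq_mul, mul_one]; rfl
        _ ≤ ∫ z in S ∩ V, (degIn G U z : ℝ) ∂μ := by
            refine setIntegral_mono_on (integrable_const 1).integrableOn
              hint.integrableOn (hSmeas.inter hVopen.measurableSet) ?_
            intro z hz
            exact_mod_cast hz.2
        _ ≤ ∫ z in S, (degIn G U z : ℝ) ∂μ := by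
            refine setIntegral_mono_set hint.integrableOn ?_ ?_
            · filter_upwards with z using by positivity
            · exact Filter.Eventually.of_forall Set.inter_subset_left

    rw [h0] at h1
    linarith
  refine ⟨fun x y hxy => ⟨hedge x y hxy, hedge y x (hsym hxy)⟩, ?_⟩
  have h2 : μ S = μ S + μ Sᶜ := by rw [hScompl, add_zero]
  rw [h2, measure_add_measure_compl hSmeas, measure_univ]
end
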